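/- arXiv:1209.0178 — 2 statements merged into one kernel-verified Lean document; each statement's English description precedes it below -/
import Mathlib

section
/- If a Gauss diagram G₁ is obtained from G₂ by deleting one chord, then genus(F_{G₁}) ≤ genus(F_{G₂}), where F_G is the closed orientable surface obtained by capping the ribbon surface F'_G with disks. -/
/-- A Gauss diagram with `n` (signed, oriented) chords: the `2*n` chord endpoints lie on
the core circle in cyclic order `0, 1, …, 2n-1`, and are paired off (each chord giving a
pair of endpoints) by a fixed-point-free involution.  The signs/orientations of chords do
not affect the ribbon surface. -/
structure GaussDiagram where
  n : ℕ
  pairing : Equiv.Perm (Fin (2 * n))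
  involutive : ∀ i, pairing (pairing i) = i
  fixfree : ∀ i, pairing i ≠ i

/-- The number of orbits (cycles, including fixed points) of a permutation of `Fin m`. -/
def numOrbits {m : ℕ} (p : Equiv.Perm (Fin m)) : ℕ :=
  (m - p.cycleType.sum) + p.cycleType.card

/-- The boundary permutation of the ribbon surface `F'_G` (annulus with one orientably
attached band per chord): traversing the boundary, after endpoint `i` one crosses the
band to `pairing i` and proceeds to the next endpoint `pairing i + 1`. -/
def boundaryPerm (G : GaussDiagram) : Equiv.Perm (Fin (2 * G.n)) :=
  G.pairing.trans (finRotate (2 * G.n))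

/-- The number `c` of boundary components of the ribbon surface `F'_G`
(for `n = 0`, `F'_G` is the annulus, with two boundary circles). -/
def ribbonBoundary (G : GaussDiagram) : ℕ :=
  if G.n = 0 then 2 else numOrbits (boundaryPerm G) + 1

/-- Euler characteristic of the ribbon surface `F'_G`: the annulus has `χ = 0` and each
attached band decreases `χ` by one, so `χ(F'_G) = -n`. -/
def ribbonChi (G : GaussDiagram) : ℤ := -(G.n : ℤ)

/-- Euler characteristic of the closed orientable surface `F_G` obtained by capping each
of the `c` boundary circles of `F'_G` with a disk: `χ(F_G) = -n + c`. -/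
def chiF (G : GaussDiagram) : ℤ := -(G.n : ℤ) + (ribbonBoundary G : ℤ)

/-- Genus of the closed orientable surface `F_G`, via `χ(F_G) = -n + c = 2 - 2g`. -/
def genusF (G : GaussDiagram) : ℕ := (G.n + 2 - ribbonBoundary G) / 2

/-- `G₁` is obtained from `G₂` by deleting one chord: there is a (cyclic-)order
preserving embedding of the endpoints of `G₁` into those of `G₂`, commuting with the
pairings, whose image misses exactly the two endpoints of one chord of `G₂`. -/
def IsChordDeletion (G₁ G₂ : GaussDiagram) : Prop :=
  G₂.n = G₁.n + 1 ∧
  ∃ ι : Fin (2 * G₁.n) ↪o Fin (2 * G₂.n),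
    (∀ i, G₂.pairing (ι i) = ι (G₁.pairing i)) ∧
    ∃ a : Fin (2 * G₂.n), ∀ i, ι i ≠ a ∧ ι i ≠ G₂.pairing a

section Helpers

open Equiv Equiv.Perm
open Fin.NatCast

section Aux

variable {α : Type*} [Fintype α] [DecidableEq α]

/-- The same-cycle setoid of a permutation. -/
def scSetoid (p : Equiv.Perm α) : Setoid α :=
  ⟨p.SameCycle, ⟨fun x => Equiv.Perm.SameCycle.refl p x, fun h => h.symm, fun h h' => h.trans h'⟩⟩

/-- Number of orbits, counted as the number of same-cycle classes. -/
noncomputable def orbCount (p : Equiv.Perm α) : ℕ := Nat.card (Quotient (scSetoid p))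

lemma sameCycle_iff_nat (p : Equiv.Perm α) (x y : α) :
    p.SameCycle x y ↔ ∃ k : ℕ, (p ^ k) x = y := by
  constructor
  · intro h
    obtain ⟨i, _, hi⟩ := h.exists_pow_eq'
    exact ⟨i, hi⟩
  · rintro ⟨k, rfl⟩
    exact ⟨(k : ℤ), by rw [zpow_natCast]⟩

lemma pow_mul_swap_eq (σ : Equiv.Perm α) (a b x : α)
    (ha : ∀ k : ℕ, (σ ^ k) x ≠ a) (hb : ∀ k : ℕ, (σ ^ k) x ≠ b) :
    ∀ k : ℕ, ((σ * Equiv.swap a b) ^ k) x = (σ ^ k) x := by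
  intro k
  induction k with
  | zero => simp
  | succ k ih =>
    rw [pow_succ', pow_succ', Equiv.Perm.mul_apply, Equiv.Perm.mul_apply, ih,
      Equiv.Perm.mul_apply, Equiv.swap_apply_of_ne_of_ne (ha k) (hb k)]

lemma sameCycle_mul_swap_iff (σ : Equiv.Perm α) (a b x : α)
    (hxa : ¬ σ.SameCycle x a) (hxb : ¬ σ.SameCycle x b) (y : α) :
    (σ * Equiv.swap a b).SameCycle x y ↔ σ.SameCycle x y := by
  have ha : ∀ k : ℕ, (σ ^ k) x ≠ a := fun k hk =>
    hxa ((sameCycle_iff_nat σ x a).mpr ⟨k, hk⟩)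
  have hb : ∀ k : ℕ, (σ ^ k) x ≠ b := fun k hk =>
    hxb ((sameCycle_iff_nat σ x b).mpr ⟨k, hk⟩)
  rw [sameCycle_iff_nat, sameCycle_iff_nat]
  exact exists_congr fun k => by rw [pow_mul_swap_eq σ a b x ha hb k]

lemma sameCycle_mul_swap_iff' (σ : Equiv.Perm α) (a b x : α)
    (hxa : ¬ (σ * Equiv.swap a b).SameCycle x a)
    (hxb : ¬ (σ * Equiv.swap a b).SameCycle x b) (y : α) :
    (σ * Equiv.swap a b).SameCycle x y ↔ σ.SameCycle x y := by
  have h := sameCycle_mul_swap_iff (σ * Equiv.swap a b) a b x hxa hxb y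
  rw [mul_assoc, Equiv.swap_mul_self, mul_one] at h
  exact h.symm

lemma orbCount_mul_swap_le (σ : Equiv.Perm α) (a b : α) :
    orbCount (σ * Equiv.swap a b) ≤ orbCount σ + 1 := by
  classical
  set τ := Equiv.swap a b with hτ
  -- surjection from (orbits of σ) ⊕ Unit onto orbits of σ * τ
  have wd : ∀ x y : α, σ.SameCycle x y →
      (if σ.SameCycle x a ∨ σ.SameCycle x b then
         (Quotient.mk (scSetoid (σ * τ)) a) else Quotient.mk (scSetoid (σ * τ)) x) =
      (if σ.SameCycle y a ∨ σ.SameCycle y b then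
         (Quotient.mk (scSetoid (σ * τ)) a) else Quotient.mk (scSetoid (σ * τ)) y) := by
    intro x y hxy
    have hcond : (σ.SameCycle x a ∨ σ.SameCycle x b) ↔ (σ.SameCycle y a ∨ σ.SameCycle y b) := by
      constructor
      · rintro (h | h); exacts [Or.inl (hxy.symm.trans h), Or.inr (hxy.symm.trans h)]
      · rintro (h | h); exacts [Or.inl (hxy.trans h), Or.inr (hxy.trans h)]
    by_cases hc : σ.SameCycle x a ∨ σ.SameCycle x b
    · rw [if_pos hc, if_pos (hcond.mp hc)]
    · rw [if_neg hc, if_neg (fun h => hc (hcond.mpr h))]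
      refine Quotient.sound ?_
      have hxa : ¬ σ.SameCycle x a := fun h => hc (Or.inl h)
      have hxb : ¬ σ.SameCycle x b := fun h => hc (Or.inr h)
      exact (sameCycle_mul_swap_iff σ a b x hxa hxb y).mpr hxy
  let F : Quotient (scSetoid σ) ⊕ Unit → Quotient (scSetoid (σ * τ)) := fun z =>
    match z with
    | Sum.inr _ => Quotient.mk (scSetoid (σ * τ)) b
    | Sum.inl q => Quotient.lift _ wd q
  have hsurj : Function.Surjective F := by
    intro q
    induction q using Quotient.ind with
    | _ x =>
      by_cases h1 : (σ * τ).SameCycle x a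
      · refine ⟨Sum.inl (Quotient.mk (scSetoid σ) a), ?_⟩
        show (if σ.SameCycle a a ∨ σ.SameCycle a b then _ else _) = _
        rw [if_pos (Or.inl (Equiv.Perm.SameCycle.refl σ a))]
        exact Quotient.sound h1.symm
      · by_cases h2 : (σ * τ).SameCycle x b
        · exact ⟨Sum.inr (), Quotient.sound h2.symm⟩
        · refine ⟨Sum.inl (Quotient.mk (scSetoid σ) x), ?_⟩
          show (if σ.SameCycle x a ∨ σ.SameCycle x b then _ else _) = _
          have hxa : ¬ σ.SameCycle x a := fun h =>
            h1 ((sameCycle_mul_swap_iff' σ a b x h1 h2 a).mpr h)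
          have hxb : ¬ σ.SameCycle x b := fun h =>
            h2 ((sameCycle_mul_swap_iff' σ a b x h1 h2 b).mpr h)
          rw [if_neg (fun h => h.elim hxa hxb)]
  have hcard := Nat.card_le_card_of_surjective F hsurj
  rw [Nat.card_sum] at hcard
  have hu : Nat.card Unit = 1 := by simp
  rw [hu] at hcard
  exact hcard

lemma orbCount_le_of_semiconj {β : Type*} [Fintype β] [DecidableEq β]
    (q : Equiv.Perm β) (r : Equiv.Perm α) (f : β → α)
    (h1 : ∀ j, r.SameCycle (f j) (f (q j)))
    (h2 : ∀ x, ∃ j, r.SameCycle x (f j)) :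
    orbCount r ≤ orbCount q := by
  classical
  have key : ∀ (k : ℕ) (j : β), r.SameCycle (f j) (f ((q ^ k) j)) := by
    intro k
    induction k with
    | zero => intro j; simpa using Equiv.Perm.SameCycle.refl r (f j)
    | succ k ih =>
      intro j
      have : (q ^ (k + 1)) j = (q ^ k) (q j) := by rw [pow_succ, Equiv.Perm.mul_apply]
      rw [this]
      exact (h1 j).trans (ih (q j))
  have wd : ∀ i j : β, q.SameCycle i j →
      Quotient.mk (scSetoid r) (f i) = Quotient.mk (scSetoid r) (f j) := by
    intro i j hij
    obtain ⟨k, rfl⟩ := (sameCycle_iff_nat q i j).mp hij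
    exact Quotient.sound (key k i)
  let F : Quotient (scSetoid q) → Quotient (scSetoid r) := Quotient.lift _ wd
  have hsurj : Function.Surjective F := by
    intro z
    induction z using Quotient.ind with
    | _ x =>
      obtain ⟨j, hj⟩ := h2 x
      exact ⟨Quotient.mk (scSetoid q) j, Quotient.sound hj.symm⟩
  exact Nat.card_le_card_of_surjective F hsurj

lemma orbCount_eq (p : Equiv.Perm α) :
    orbCount p = (Fintype.card α - p.cycleType.sum) + p.cycleType.card := by
  classical
  -- bijection between orbits and (fixed points) ⊕ (cycle factors)
  let g0 : α → ({x : α // p x = x} ⊕ {c : Equiv.Perm α // c ∈ p.cycleFactorsFinset}) :=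
    fun x =>
      if h : p x = x then Sum.inl ⟨x, h⟩
      else Sum.inr ⟨p.cycleOf x,
        Equiv.Perm.cycleOf_mem_cycleFactorsFinset_iff.mpr (Equiv.Perm.mem_support.mpr h)⟩
  have fixed_of : ∀ x y : α, p x = x → p.SameCycle x y → y = x := by
    intro x y hx hxy
    obtain ⟨k, rfl⟩ := (sameCycle_iff_nat p x _).mp hxy
    clear hxy
    induction k with
    | zero => simp
    | succ k ih => rw [pow_succ', Equiv.Perm.mul_apply, ih, hx]
  have wd : ∀ x y : α, p.SameCycle x y → g0 x = g0 y := by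
    intro x y hxy
    by_cases hx : p x = x
    · obtain rfl := fixed_of x y hx hxy
      rfl
    · have hy : ¬ p y = y := by
        intro hy
        obtain rfl := fixed_of y x hy hxy.symm
        exact hx hy
      simp only [g0, dif_neg hx, dif_neg hy]
      exact congrArg _ (Subtype.ext hxy.cycleOf_eq)
  let F : Quotient (scSetoid p) → _ := Quotient.lift g0 wd
  have hinj : Function.Injective F := by
    intro z w
    induction z using Quotient.ind with
    | _ x =>
      induction w using Quotient.ind with
      | _ y =>
        intro hF
        refine Quotient.sound ?_
        have hF' : g0 x = g0 y := hF
        by_cases hx : p x = x <;> by_cases hy : p y = y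
        · rw [show g0 x = Sum.inl ⟨x, hx⟩ from dif_pos hx,
            show g0 y = Sum.inl ⟨y, hy⟩ from dif_pos hy] at hF'
          obtain rfl : x = y := congrArg Subtype.val (Sum.inl.inj hF')
          exact Equiv.Perm.SameCycle.refl p x
        · rw [show g0 x = Sum.inl ⟨x, hx⟩ from dif_pos hx,
            show g0 y = Sum.inr ⟨p.cycleOf y, Equiv.Perm.cycleOf_mem_cycleFactorsFinset_iff.mpr (Equiv.Perm.mem_support.mpr hy)⟩ from dif_neg hy] at hF'
          exact absurd hF' (by simp)
        · rw [show g0 x = Sum.inr ⟨p.cycleOf x, Equiv.Perm.cycleOf_mem_cycleFactorsFinset_iff.mpr (Equiv.Perm.mem_support.mpr hx)⟩ from dif_neg hx,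
            show g0 y = Sum.inl ⟨y, hy⟩ from dif_pos hy] at hF'
          exact absurd hF' (by simp)
        · rw [show g0 x = Sum.inr ⟨p.cycleOf x, Equiv.Perm.cycleOf_mem_cycleFactorsFinset_iff.mpr (Equiv.Perm.mem_support.mpr hx)⟩ from dif_neg hx,
            show g0 y = Sum.inr ⟨p.cycleOf y, Equiv.Perm.cycleOf_mem_cycleFactorsFinset_iff.mpr (Equiv.Perm.mem_support.mpr hy)⟩ from dif_neg hy] at hF'
          have hco : p.cycleOf x = p.cycleOf y := congrArg Subtype.val (Sum.inr.inj hF')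
          have hyy : y ∈ (p.cycleOf y).support :=
            Equiv.Perm.mem_support_cycleOf_iff.mpr
              ⟨Equiv.Perm.SameCycle.refl p y, Equiv.Perm.mem_support.mpr hy⟩
          rw [← hco] at hyy
          exact (Equiv.Perm.mem_support_cycleOf_iff.mp hyy).1
  have hsurj : Function.Surjective F := by
    rintro (⟨x, hx⟩ | ⟨c, hc⟩)
    · exact ⟨Quotient.mk (scSetoid p) x, by show g0 x = _; simp only [g0, dif_pos hx]⟩
    · have hcyc : c.IsCycle := (Equiv.Perm.mem_cycleFactorsFinset_iff.mp hc).1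
      obtain ⟨x, hcx, -⟩ := hcyc
      have hxs : x ∈ c.support := Equiv.Perm.mem_support.mpr hcx
      have hceq : c = p.cycleOf x := Equiv.Perm.cycle_is_cycleOf hxs hc
      have hpx : p x ≠ x := by
        have := (Equiv.Perm.mem_cycleFactorsFinset_iff.mp hc).2 x hxs
        rw [← this]; exact hcx
      refine ⟨Quotient.mk (scSetoid p) x, ?_⟩
      show g0 x = _
      simp only [g0, dif_neg hpx]
      exact congrArg _ (Subtype.ext hceq.symm)
  have hbij := Nat.card_eq_of_bijective F ⟨hinj, hsurj⟩
  rw [orbCount, hbij, Nat.card_sum]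
  congr 1
  · rw [Nat.card_eq_fintype_card]
    rw [Equiv.Perm.sum_cycleType]
    rw [← Finset.card_compl p.support]
    rw [Fintype.card_subtype]
    congr 1
    ext x
    simp [Equiv.Perm.mem_support]
  · have : {c : Equiv.Perm α // c ∈ p.cycleFactorsFinset} = ((p.cycleFactorsFinset : Finset (Equiv.Perm α)) : Type _) := rfl
    rw [Nat.card_eq_finsetCard]
    rw [Equiv.Perm.cycleType_def]
    rw [Multiset.card_map]
    rfl

lemma orbCount_eq_numOrbits {m : ℕ} (p : Equiv.Perm (Fin m)) : orbCount p = numOrbits p := by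
  rw [orbCount_eq, numOrbits, Fintype.card_fin]

end Aux

lemma finRotate_eq_add_one {m : ℕ} [NeZero m] (x : Fin m) : finRotate m x = x + 1 := by
  cases m with
  | zero => exact absurd rfl (NeZero.ne 0)
  | succ k => exact finRotate_succ_apply x

lemma step_lemma {M m : ℕ} [NeZero M] [NeZero m] (hm : M + 2 = m) (hM : 2 ≤ M) (ι : Fin M ↪o Fin m) (u : Fin M) :
    ∃ k : ℕ, 1 ≤ k ∧ (∀ i : ℕ, 1 ≤ i → i < k → ∀ w, ι w ≠ ι u + (i : Fin m)) ∧
      ι u + (k : Fin m) = ι (u + 1) := by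
  have valAdd : ∀ (x : Fin m) (i : ℕ), i < m →
      ((x + (i : Fin m)) : Fin m).val = (x.val + i) % m := by
    intro x i hi
    rw [Fin.val_add, Fin.val_natCast, Nat.mod_eq_of_lt hi]
  have hu1val : ((u + 1 : Fin M)).val = (u.val + 1) % M := by
    rw [Fin.val_add, Fin.val_one', Nat.mod_eq_of_lt (show 1 < M by omega)]
  by_cases hcase : u.val + 1 < M
  · -- no wraparound
    have hu1 : ((u + 1 : Fin M)).val = u.val + 1 := by rw [hu1val, Nat.mod_eq_of_lt hcase]
    have hlt : u < u + 1 := by rw [Fin.lt_def, hu1]; omega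
    have hAB : ι u < ι (u + 1) := ι.lt_iff_lt.mpr hlt
    set A := (ι u).val with hA
    set B := (ι (u + 1)).val with hB
    have hABv : A < B := hAB
    have hBm : B < m := (ι (u + 1)).isLt
    refine ⟨B - A, by omega, ?_, ?_⟩
    · intro i hi1 hik w hw
      have hval : ((ι u + (i : Fin m))).val = A + i := by
        rw [valAdd _ _ (by omega), Nat.mod_eq_of_lt (by omega)]
      have h1 : ι u < ι w := by rw [Fin.lt_def, hw, hval]; omega
      have h2 : ι w < ι (u + 1) := by rw [Fin.lt_def, hw, hval]; omega
      have h1' : u < w := ι.lt_iff_lt.mp h1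
      have h2' : w < u + 1 := ι.lt_iff_lt.mp h2
      rw [Fin.lt_def] at h1' h2'
      omega
    · apply Fin.ext
      rw [valAdd _ _ (by omega), Nat.mod_eq_of_lt (show A + (B - A) < m by omega)]
      omega
  · -- wraparound: u is the maximum element
    have hutop : u.val + 1 = M := by omega
    have hu1 : ((u + 1 : Fin M)).val = 0 := by rw [hu1val, hutop, Nat.mod_self]
    set A := (ι u).val with hA
    set B := (ι (u + 1)).val with hB
    have hAm : A < m := (ι u).isLt
    have hBm : B < m := (ι (u + 1)).isLt
    have hle : ∀ w, (ι w).val ≤ A := by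
      intro w
      have hw : w ≤ u := by rw [Fin.le_def]; omega
      exact ι.le_iff_le.mpr hw
    have hge : ∀ w, B ≤ (ι w).val := by
      intro w
      have hw : u + 1 ≤ w := by rw [Fin.le_def, hu1]; omega
      exact ι.le_iff_le.mpr hw
    have hBA : B ≤ A := hle (u + 1)
    have hne : A ≠ B := by
      intro hcon
      have h1 : ι u = ι (u + 1) := Fin.ext hcon
      have h2 : u = u + 1 := ι.injective h1
      rw [Fin.ext_iff, hu1] at h2
      omega
    refine ⟨(m - A) + B, by omega, ?_, ?_⟩
    · intro i hi1 hik w hw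
      have hivm : i < m := by omega
      have hval := valAdd (ι u) i hivm
      by_cases hsm : A + i < m
      · rw [Nat.mod_eq_of_lt hsm] at hval
        have hb := hle w
        rw [hw, hval] at hb
        omega
      · have hmod : (A + i) % m = A + i - m := by
          rw [Nat.mod_eq_sub_mod (by omega), Nat.mod_eq_of_lt (by omega)]
        rw [hmod] at hval
        have hb := hge w
        rw [hw, hval] at hb
        omega
    · apply Fin.ext
      rw [valAdd _ _ (by omega), show A + (m - A + B) = m + B by omega,
        Nat.add_mod_left, Nat.mod_eq_of_lt hBm]


end Helpers

/-- Deleting one chord does not increase the genus of the capped ribbon surface `F_G`. -/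
theorem genusF_le_of_chordDeletion (G₁ G₂ : GaussDiagram)
    (h : IsChordDeletion G₁ G₂) :
    genusF G₁ ≤ genusF G₂ := by
  classical
  obtain ⟨hn, ι, hcomm, a, hmiss⟩ := h
  by_cases h0 : G₁.n = 0
  · have hg : genusF G₁ = 0 := by simp [genusF, ribbonBoundary, h0]
    rw [hg]; exact Nat.zero_le _
  · have hn2 : G₂.n ≠ 0 := by omega
    haveI : NeZero (2 * G₂.n) := ⟨by omega⟩
    haveI : NeZero (2 * G₁.n) := ⟨by omega⟩
    have hM : 2 ≤ 2 * G₁.n := by omega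
    have hm : 2 * G₁.n + 2 = 2 * G₂.n := by omega
    have hm4 : 4 ≤ 2 * G₂.n := by omega
    set b := G₂.pairing a with hb
    have hab : a ≠ b := by rw [hb]; exact Ne.symm (G₂.fixfree a)
    set π' := G₂.pairing * Equiv.swap a b with hπ
    have hπa : π' a = a := by
      rw [hπ, Equiv.Perm.mul_apply, Equiv.swap_apply_left, hb, G₂.involutive]
    have hπb : π' b = b := by
      rw [hπ, Equiv.Perm.mul_apply, Equiv.swap_apply_right, hb]
    have hπι : ∀ j, π' (ι j) = ι (G₁.pairing j) := by
      intro j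
      rw [hπ, Equiv.Perm.mul_apply,
        Equiv.swap_apply_of_ne_of_ne (hmiss j).1 (hmiss j).2, hcomm]
    set r := finRotate (2 * G₂.n) * π' with hr
    have hrx : ∀ x, r x = π' x + 1 := by
      intro x
      rw [hr, Equiv.Perm.mul_apply, finRotate_eq_add_one]
    have hbd2 : boundaryPerm G₂ = r * Equiv.swap a b := by
      ext x
      simp only [boundaryPerm, Equiv.trans_apply, hr, hπ, Equiv.Perm.mul_apply,
        Equiv.swap_apply_self]
    -- anything outside the range of ι is a or b
    have hcomp : ∀ x : Fin (2 * G₂.n), (∀ w, ι w ≠ x) → x = a ∨ x = b := by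
      intro x hx
      have hsub : ({a, b} : Finset (Fin (2 * G₂.n))) ⊆
          (Finset.univ.image fun w => ι w)ᶜ := by
        intro y hy
        rw [Finset.mem_compl, Finset.mem_image]
        rintro ⟨w, -, hw⟩
        rcases Finset.mem_insert.mp hy with rfl | hy'
        · exact (hmiss w).1 hw
        · rw [Finset.mem_singleton] at hy'
          subst hy'
          exact (hmiss w).2 hw
      have hcard : ((Finset.univ.image fun w => ι w)ᶜ).card ≤
          ({a, b} : Finset (Fin (2 * G₂.n))).card := by
        rw [Finset.card_compl, Finset.card_image_of_injective _ ι.injective,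
          Finset.card_univ, Fintype.card_fin, Fintype.card_fin, Finset.card_pair hab]
        omega
      have hEq := Finset.eq_of_subset_of_card_le hsub hcard
      have hxmem : x ∈ (Finset.univ.image fun w => ι w)ᶜ := by
        rw [Finset.mem_compl, Finset.mem_image]
        rintro ⟨w, -, hw⟩
        exact hx w hw
      rw [← hEq] at hxmem
      simpa using hxmem
    have hone : (1 : Fin (2 * G₂.n)) ≠ 0 := by
      intro hcon
      have hv := congrArg Fin.val hcon
      rw [Fin.val_one', Fin.val_zero, Nat.mod_eq_of_lt (by omega)] at hv
      exact one_ne_zero hv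
    have htwo : (1 : Fin (2 * G₂.n)) + 1 ≠ 0 := by
      intro hcon
      have hv := congrArg Fin.val hcon
      have h1m : 1 % (2 * G₂.n) = 1 := Nat.mod_eq_of_lt (by omega)
      simp only [Fin.val_add, Fin.val_one', Fin.val_zero, h1m] at hv
      rw [Nat.mod_eq_of_lt (by omega)] at hv
      omega
    -- every orbit of r meets the range of ι
    have h2 : ∀ x, ∃ j, r.SameCycle x (ι j) := by
      intro x
      by_cases hx : ∃ j, ι j = x
      · obtain ⟨j, rfl⟩ := hx
        exact ⟨j, Equiv.Perm.SameCycle.refl r (ι j)⟩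
      · push_neg at hx
        have hxab := hcomp x hx
        have hfix : π' x = x := by rcases hxab with rfl | rfl; exacts [hπa, hπb]
        have hx1 : r x = x + 1 := by rw [hrx, hfix]
        by_cases hx2 : ∃ j, ι j = x + 1
        · obtain ⟨j, hj⟩ := hx2
          exact ⟨j, ⟨1, by rw [zpow_one, hx1, hj]⟩⟩
        · push_neg at hx2
          have hx1ab := hcomp (x + 1) hx2
          have hne1 : x + 1 ≠ x := by
            intro hcon
            exact hone (add_eq_left.mp hcon)
          have hfix1 : π' (x + 1) = x + 1 := by
            rcases hx1ab with h' | h' <;> rw [h'] <;> [exact hπa; exact hπb]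
          have hx2v : r (x + 1) = x + 1 + 1 := by rw [hrx, hfix1]
          have hx3 : ∃ j, ι j = x + 1 + 1 := by
            by_contra hx3
            push_neg at hx3
            have hx2ab := hcomp (x + 1 + 1) hx3
            -- x+1+1 must be a or b, but a,b ∈ {x, x+1}
            have ha2 : x + 1 + 1 ≠ x := by
              intro hcon
              rw [add_assoc] at hcon
              exact htwo (add_eq_left.mp hcon)
            have ha3 : x + 1 + 1 ≠ x + 1 := fun hcon => hone (add_eq_left.mp hcon)
            rcases hxab with h1 | h1 <;> rcases hx1ab with h2 | h2
            · exact hne1 (h2.trans h1.symm)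
            · rcases hx2ab with h3 | h3
              · exact ha2 (h3.trans h1.symm)
              · exact ha3 (h3.trans h2.symm)
            · rcases hx2ab with h3 | h3
              · exact ha3 (h3.trans h2.symm)
              · exact ha2 (h3.trans h1.symm)
            · exact hne1 (h2.trans h1.symm)
          obtain ⟨j, hj⟩ := hx3
          refine ⟨j, (sameCycle_iff_nat r x (ι j)).mpr ⟨2, ?_⟩⟩
          rw [pow_succ, pow_one, Equiv.Perm.mul_apply, hx1, hx2v, hj]
    -- the induced first-return step
    have h1 : ∀ j, r.SameCycle (ι j) (ι (boundaryPerm G₁ j)) := by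
      intro j
      have hbp : boundaryPerm G₁ j = G₁.pairing j + 1 := by
        simp only [boundaryPerm, Equiv.trans_apply]
        rw [finRotate_eq_add_one]
      obtain ⟨k, hk1, hint, hkeq⟩ := step_lemma hm hM ι (G₁.pairing j)
      open Fin.NatCast in
      have claim : ∀ i : ℕ, 1 ≤ i → i ≤ k →
          (r ^ i) (ι j) = ι (G₁.pairing j) + (i : Fin (2 * G₂.n)) := by
        intro i
        induction i with
        | zero => exact fun h1' _ => absurd h1' (by omega)
        | succ i ih =>
          intro h1' hik'
          by_cases hi0 : i = 0
          · subst hi0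
            rw [pow_one, hrx, hπι j, Nat.cast_one]
          · have hprev := ih (by omega) (by omega)
            rw [pow_succ', Equiv.Perm.mul_apply, hprev, hrx]
            have hmid := hcomp (ι (G₁.pairing j) + (i : Fin (2 * G₂.n)))
              (fun w => hint i (by omega) (by omega) w)
            have hfixm : π' (ι (G₁.pairing j) + (i : Fin (2 * G₂.n))) =
                ι (G₁.pairing j) + (i : Fin (2 * G₂.n)) := by
              rcases hmid with h' | h' <;> rw [h'] <;> [exact hπa; exact hπb]
            rw [hfixm, Nat.cast_add, Nat.cast_one, add_assoc]
      have hck := claim k hk1 le_rfl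
      refine (sameCycle_iff_nat r _ _).mpr ⟨k, ?_⟩
      rw [hck, hkeq, hbp]
    have key1 : orbCount (boundaryPerm G₂) ≤ orbCount r + 1 := by
      rw [hbd2]; exact orbCount_mul_swap_le r a b
    have key2 : orbCount r ≤ orbCount (boundaryPerm G₁) :=
      orbCount_le_of_semiconj (boundaryPerm G₁) r (fun j => ι j) h1 h2
    have hnum : numOrbits (boundaryPerm G₂) ≤ numOrbits (boundaryPerm G₁) + 1 := by
      rw [← orbCount_eq_numOrbits, ← orbCount_eq_numOrbits]
      omega
    simp only [genusF, ribbonBoundary, if_neg h0, if_neg hn2]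
    apply Nat.div_le_div_right
    omega
end

section
/- Assume there exists a projection map proj from Gauss diagrams to realizable Gauss diagrams such that: (1) proj sends equivalent diagrams to equivalent diagrams, (2) proj(G) is obtained from G by deleting chords, (3) proj(G) = G for realizable G. Then for every classical knot K and every virtual knot K̃ realizable by K, the virtual canonical genus satisfies g_vc(K̃) = g_c(K). -/
open Equiv Equiv.Perm
open Fin.NatCast

lemma sameCycle_eq_of_fixed {α : Type*} {f : Perm α} {x y : α} (h : f.SameCycle x y)
    (hx : f x = x) : x = y := by
  obtain ⟨k, hk⟩ := h
  rw [zpow_apply_eq_self_of_apply_eq_self hx k] at hk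
  exact hk

lemma numOrbits_eq_nat_card {m : ℕ} (p : Equiv.Perm (Fin m)) :
    ((m - p.cycleType.sum) + Multiset.card p.cycleType) =
      Nat.card (Quotient (Equiv.Perm.SameCycle.setoid p)) := by
  classical
  set F : Quotient (Equiv.Perm.SameCycle.setoid p) →
      (Function.fixedPoints p ⊕ {c // c ∈ p.cycleFactorsFinset}) :=
    Quotient.lift (fun x => if h : p x = x then Sum.inl ⟨x, h⟩ else
        Sum.inr ⟨p.cycleOf x,
          Equiv.Perm.cycleOf_mem_cycleFactorsFinset_iff.mpr (mem_support.mpr h)⟩)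
      (by
        intro x y hxy
        replace hxy : p.SameCycle x y := hxy
        by_cases hx : p x = x
        · obtain rfl := sameCycle_eq_of_fixed hxy hx
          rfl
        · have hy : p y ≠ y := by
            intro hy
            obtain rfl := sameCycle_eq_of_fixed hxy.symm hy
            exact hx hy
          simp only [dif_neg hx, dif_neg hy]
          exact congrArg _ (Subtype.ext (hxy.cycleOf_eq)) ) with hF
  have hinj : Function.Injective F := by
    intro q1 q2
    induction q1 using Quotient.inductionOn with | h x =>
    induction q2 using Quotient.inductionOn with | h y =>
    intro h
    simp only [hF, Quotient.lift_mk] at h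
    by_cases hx : p x = x <;> by_cases hy : p y = y
    · simp only [dif_pos hx, dif_pos hy] at h
      obtain rfl : x = y := congrArg Subtype.val (Sum.inl_injective h)
      rfl
    · simp only [dif_pos hx, dif_neg hy] at h; simp at h
    · simp only [dif_neg hx, dif_pos hy] at h; simp at h
    · simp only [dif_neg hx, dif_neg hy] at h
      have hco : p.cycleOf x = p.cycleOf y := by simpa using h
      have hys : y ∈ (p.cycleOf y).support :=
        mem_support_cycleOf_iff.mpr ⟨Equiv.Perm.SameCycle.refl _ _, mem_support.mpr hy⟩
      rw [← hco] at hys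
      exact Quotient.sound (mem_support_cycleOf_iff.mp hys).1
  have hsurj : Function.Surjective F := by
    rintro (⟨x, hx⟩ | ⟨c, hc⟩)
    · refine ⟨Quotient.mk _ x, ?_⟩
      simp only [hF, Quotient.lift_mk]
      rw [dif_pos (show p x = x from hx)]
    · obtain ⟨hcyc, hmem⟩ := mem_cycleFactorsFinset_iff.mp hc
      obtain ⟨x, hx, -⟩ := hcyc
      have hxs : x ∈ c.support := mem_support.mpr hx
      have hpx : p x ≠ x := by rw [← hmem x hxs]; exact hx
      refine ⟨Quotient.mk _ x, ?_⟩
      simp only [hF, Quotient.lift_mk]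
      rw [dif_neg hpx]
      exact congrArg _ (Subtype.ext (cycle_is_cycleOf hxs hc).symm)
  have hcard := Nat.card_congr (Equiv.ofBijective F ⟨hinj, hsurj⟩)
  rw [hcard, Nat.card_sum, Nat.card_eq_fintype_card, Nat.card_eq_fintype_card,
    Equiv.Perm.card_fixedPoints, Fintype.card_coe, Fintype.card_fin]
  congr 1
  rw [Equiv.Perm.cycleType]
  simp

lemma pow_eq_pow_of_notSameCycle {m : ℕ} {f g : Perm (Fin m)} {a b x : Fin m}
    (hfg : ∀ z, z ≠ a → z ≠ b → f z = g z)
    (ha : ¬ g.SameCycle x a) (hb : ¬ g.SameCycle x b) :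
    ∀ k : ℕ, (f ^ k) x = (g ^ k) x
  | 0 => rfl
  | (k+1) => by
    have hwa : (g ^ k) x ≠ a := fun h => ha ⟨k, by rw [zpow_natCast]; exact h⟩
    have hwb : (g ^ k) x ≠ b := fun h => hb ⟨k, by rw [zpow_natCast]; exact h⟩
    rw [pow_succ', pow_succ', Equiv.Perm.mul_apply, Equiv.Perm.mul_apply,
      pow_eq_pow_of_notSameCycle hfg ha hb k]
    exact hfg _ hwa hwb

lemma sameCycle_iff_of_notSameCycle {m : ℕ} {f g : Perm (Fin m)} {a b x y : Fin m}
    (hfg : ∀ z, z ≠ a → z ≠ b → f z = g z)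
    (ha : ¬ g.SameCycle x a) (hb : ¬ g.SameCycle x b) :
    g.SameCycle x y ↔ f.SameCycle x y := by
  constructor
  · rintro h
    obtain ⟨k, -, hk⟩ := h.exists_pow_eq'
    exact ⟨k, by rw [zpow_natCast, pow_eq_pow_of_notSameCycle hfg ha hb k]; exact hk⟩
  · rintro h
    obtain ⟨k, -, hk⟩ := h.exists_pow_eq'
    exact ⟨k, by rw [zpow_natCast, ← pow_eq_pow_of_notSameCycle hfg ha hb k]; exact hk⟩
lemma card_quot_swap_le {m : ℕ} (f : Perm (Fin m)) (a b : Fin m) :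
    Nat.card (Quotient (Equiv.Perm.SameCycle.setoid (f * Equiv.swap a b))) ≤
      Nat.card (Quotient (Equiv.Perm.SameCycle.setoid f)) + 1 := by
  classical
  set g := f * Equiv.swap a b with hg
  have hfg : ∀ z, z ≠ a → z ≠ b → f z = g z := by
    intro z hza hzb
    simp [hg, Equiv.swap_apply_of_ne_of_ne hza hzb]
  set ψ : Quotient (Equiv.Perm.SameCycle.setoid g) →
      (Quotient (Equiv.Perm.SameCycle.setoid f)) ⊕ Unit :=
    Quotient.lift (fun x => if g.SameCycle x a then Sum.inr ()
      else if g.SameCycle x b then Sum.inl (Quotient.mk _ b)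
      else Sum.inl (Quotient.mk _ x))
      (by
        intro x y hxy
        replace hxy : g.SameCycle x y := hxy
        by_cases hxa : g.SameCycle x a
        · simp only [if_pos hxa, if_pos (hxy.symm.trans hxa)]
        · have hya : ¬ g.SameCycle y a := fun h => hxa (hxy.trans h)
          by_cases hxb : g.SameCycle x b
          · simp only [if_neg hxa, if_neg hya, if_pos hxb, if_pos (hxy.symm.trans hxb)]
          · have hyb : ¬ g.SameCycle y b := fun h => hxb (hxy.trans h)
            simp only [if_neg hxa, if_neg hya, if_neg hxb, if_neg hyb]
            exact congrArg _ (Quotient.sound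
              ((sameCycle_iff_of_notSameCycle hfg hxa hxb).mp hxy))) with hψ
  have hinj : Function.Injective ψ := by
    intro q1 q2
    induction q1 using Quotient.inductionOn with | h x =>
    induction q2 using Quotient.inductionOn with | h y =>
    intro h
    simp only [hψ, Quotient.lift_mk] at h
    by_cases hxa : g.SameCycle x a <;> by_cases hya : g.SameCycle y a
    · exact Quotient.sound (hxa.trans hya.symm)
    · rw [if_pos hxa, if_neg hya] at h
      split_ifs at h <;> simp at h
    · rw [if_neg hxa, if_pos hya] at h
      split_ifs at h <;> simp at h
    · rw [if_neg hxa, if_neg hya] at h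
      by_cases hxb : g.SameCycle x b <;> by_cases hyb : g.SameCycle y b
      · exact Quotient.sound (hxb.trans hyb.symm)
      · rw [if_pos hxb, if_neg hyb] at h
        have hby : f.SameCycle b y := Quotient.exact (by simpa using h)
        exact absurd ((sameCycle_iff_of_notSameCycle hfg hya hyb).mpr hby.symm).symm
          (fun hc => hyb hc.symm)
      · rw [if_neg hxb, if_pos hyb] at h
        have hbx : f.SameCycle b x := Quotient.exact (by simpa using h.symm)
        exact absurd ((sameCycle_iff_of_notSameCycle hfg hxa hxb).mpr hbx.symm).symm
          (fun hc => hxb hc.symm)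
      · rw [if_neg hxb, if_neg hyb] at h
        have hxy : f.SameCycle x y := Quotient.exact (by simpa using h)
        exact Quotient.sound ((sameCycle_iff_of_notSameCycle hfg hxa hxb).mpr hxy)
  have hle := Nat.card_le_card_of_injective ψ hinj
  simpa [Nat.card_sum] using hle

section deletion
variable {d m : ℕ} (ι : Fin d ↪o Fin m) (a b : Fin m)

lemma mem_pair_of_not_range (hm : m = d + 2) (hab : a ≠ b)
    (hmiss : ∀ i, ι i ≠ a ∧ ι i ≠ b) (x : Fin m) :
    (∃ i, ι i = x) ∨ x = a ∨ x = b := by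
  classical
  by_cases hx : ∃ i, ι i = x
  · exact Or.inl hx
  push_neg at hx
  right
  by_contra hcon
  push_neg at hcon
  have himg : (Finset.univ.image (⇑ι)).card = d := by
    rw [Finset.card_image_of_injective _ ι.injective, Finset.card_univ, Fintype.card_fin]
  have hsub : ({a, b, x} : Finset (Fin m)) ⊆ (Finset.univ.image (⇑ι))ᶜ := by
    intro y hy
    simp only [Finset.mem_insert, Finset.mem_singleton] at hy
    rw [Finset.mem_compl, Finset.mem_image]
    rintro ⟨i, -, hi⟩
    rcases hy with rfl | rfl | rfl
    · exact (hmiss i).1 hi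
    · exact (hmiss i).2 hi
    · exact hx i hi
  have hcard3 : ({a, b, x} : Finset (Fin m)).card = 3 := by
    rw [Finset.card_insert_of_notMem (by simp [hab, hcon.1.symm]),
      Finset.card_insert_of_notMem (by simp [hcon.2.symm]), Finset.card_singleton]
  have hcompl : ((Finset.univ.image (⇑ι))ᶜ).card = 2 := by
    rw [Finset.card_compl, himg, Fintype.card_fin]
    omega
  have := Finset.card_le_card hsub
  omega

lemma missing_bound (hm : m = d + 2) (hab : a ≠ b)
    (hmiss : ∀ i, ι i ≠ a ∧ ι i ≠ b)
    (Y : Finset (Fin m)) (hY : ∀ x ∈ Y, ∀ i, ι i ≠ x) : Y.card ≤ 2 := by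
  have hsub : Y ⊆ {a, b} := by
    intro x hx
    rcases mem_pair_of_not_range ι a b hm hab hmiss x with ⟨i, hi⟩ | h | h
    · exact absurd hi (hY x hx i)
    · simp [h]
    · simp [h]
  calc Y.card ≤ ({a, b} : Finset (Fin m)).card := Finset.card_le_card hsub
    _ = 2 := Finset.card_pair hab

lemma succ_step (hm : m = d + 2) (hd : 2 ≤ d) (hab : a ≠ b)
    (hmiss : ∀ i, ι i ≠ a ∧ ι i ≠ b) (j : Fin d) :
    haveI : NeZero m := ⟨by omega⟩
    haveI : NeZero d := ⟨by omega⟩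
    ∃ k : ℕ, 1 ≤ k ∧ k ≤ 3 ∧ ι (j + 1) = ι j + (k : Fin m) ∧
      ∀ t : ℕ, 1 ≤ t → t < k → ∀ i, ι i ≠ ι j + (t : Fin m) := by
  haveI : NeZero m := ⟨by omega⟩
  haveI : NeZero d := ⟨by omega⟩
  have hm4 : 4 ≤ m := by omega
  have hvadd : ∀ (x : Fin m) (t : ℕ), t < m → (x + (t : Fin m)).val = (x.val + t) % m := by
    intro x t ht
    rw [Fin.add_def]
    simp [Fin.val_natCast, Nat.mod_eq_of_lt ht]
  by_cases hj : (j : ℕ) + 1 < d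
  · set j' : Fin d := ⟨(j : ℕ) + 1, hj⟩ with hj'
    have hjj : j + 1 = j' := by
      apply Fin.ext
      rw [Fin.add_def]
      simp only [Fin.val_one' d, hj']
      rw [Nat.mod_eq_of_lt (show 1 < d by omega), Nat.mod_eq_of_lt (by omega)]
    have hlt : ι j < ι j' := ι.strictMono (by rw [Fin.lt_def]; simp [hj'])
    set k := (ι j' : ℕ) - (ι j : ℕ) with hk
    have hk1 : 1 ≤ k := by
      have := Fin.lt_def.mp hlt
      omega
    have gap : ∀ x : Fin m, ι j < x → x < ι j' → ∀ i, ι i ≠ x := by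
      intro x h1 h2 i hix
      have hji : j < i := ι.lt_iff_lt.mp (by rw [hix]; exact h1)
      have hj'i : j' ≤ i := by
        rw [Fin.le_def]
        have := Fin.lt_def.mp hji
        simp only [hj']
        omega
      have := ι.monotone hj'i
      rw [hix] at this
      exact absurd h2 (not_lt.mpr this)
    have hk3 : k ≤ 3 := by
      have hb2 := missing_bound ι a b hm hab hmiss (Finset.Ioo (ι j) (ι j'))
        (fun x hx i => gap x (Finset.mem_Ioo.mp hx).1 (Finset.mem_Ioo.mp hx).2 i)
      rw [Fin.card_Ioo] at hb2
      omega
    refine ⟨k, hk1, hk3, ?_, ?_⟩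
    · rw [hjj]
      apply Fin.ext
      rw [hvadd _ k (by omega)]
      have h1 : (ι j : ℕ) + k = (ι j' : ℕ) := by omega
      rw [h1, Nat.mod_eq_of_lt (ι j').isLt]
    · intro t ht1 htk i
      apply gap
      · rw [Fin.lt_def, hvadd _ t (by omega), Nat.mod_eq_of_lt (by omega)]
        omega
      · rw [Fin.lt_def, hvadd _ t (by omega), Nat.mod_eq_of_lt (by omega)]
        omega
  · have hjd : (j : ℕ) + 1 = d := by have := j.isLt; omega
    have hd0 : 0 < d := by omega
    set z0 : Fin d := ⟨0, hd0⟩ with hz0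
    have hj1 : j + 1 = z0 := by
      apply Fin.ext
      rw [Fin.add_def]
      simp only [hz0, Fin.val_one' d]
      rw [Nat.mod_eq_of_lt (show 1 < d by omega)]
      simp [hjd]
    have hmax : ∀ i : Fin d, ι i ≤ ι j := by
      intro i
      apply ι.monotone
      rw [Fin.le_def]
      have := i.isLt
      omega
    have hzmin : ∀ i : Fin d, ι z0 ≤ ι i := by
      intro i
      apply ι.monotone
      rw [Fin.le_def]
      simp [hz0]
    have hzs : ι z0 < ι j := ι.strictMono (by rw [Fin.lt_def]; show 0 < (j : ℕ); omega)
    set k := (m - (ι j : ℕ)) + (ι z0 : ℕ) with hk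
    have hk1 : 1 ≤ k := by have := (ι j).isLt; omega
    have gapHi : ∀ x : Fin m, ι j < x → ∀ i, ι i ≠ x := by
      intro x h1 i hix
      exact absurd (hmax i) (by rw [hix]; exact not_le.mpr h1)
    have gapLo : ∀ x : Fin m, x < ι z0 → ∀ i, ι i ≠ x := by
      intro x h1 i hix
      exact absurd (hzmin i) (by rw [hix]; exact not_le.mpr h1)
    have hk3 : k ≤ 3 := by
      have hdisj : Disjoint (Finset.Ioi (ι j)) (Finset.Iio (ι z0)) := by
        rw [Finset.disjoint_left]
        intro x hx1 hx2
        rw [Finset.mem_Ioi] at hx1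
        rw [Finset.mem_Iio] at hx2
        exact absurd (lt_trans hx2 hzs) (not_lt.mpr (le_of_lt hx1))
      have hb2 := missing_bound ι a b hm hab hmiss (Finset.Ioi (ι j) ∪ Finset.Iio (ι z0))
        (by
          intro x hx i
          rcases Finset.mem_union.mp hx with h | h
          · exact gapHi x (Finset.mem_Ioi.mp h) i
          · exact gapLo x (Finset.mem_Iio.mp h) i)
      rw [Finset.card_union_of_disjoint hdisj, Fin.card_Ioi, Fin.card_Iio] at hb2
      have h1 := (ι j).isLt
      have h2 := Fin.lt_def.mp hzs
      omega
    have hkm : k < m := by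
      have h2 := Fin.lt_def.mp hzs
      have := (ι j).isLt
      omega
    refine ⟨k, hk1, hk3, ?_, ?_⟩
    · rw [hj1]
      apply Fin.ext
      rw [hvadd _ k hkm]
      have h1 : (ι j : ℕ) + k = m + (ι z0 : ℕ) := by have := (ι j).isLt; omega
      rw [h1, Nat.add_mod_left, Nat.mod_eq_of_lt (ι z0).isLt]
    · intro t ht1 htk i
      have htm : t < m := by omega
      by_cases hw : (ι j : ℕ) + t < m
      · apply gapHi
        rw [Fin.lt_def, hvadd _ t htm, Nat.mod_eq_of_lt hw]
        omega
      · apply gapLo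
        rw [Fin.lt_def, hvadd _ t htm]
        have h2m : (ι j : ℕ) + t < 2 * m := by have := (ι j).isLt; omega
        have : ((ι j : ℕ) + t) % m = (ι j : ℕ) + t - m := by
          rw [Nat.mod_eq_sub_mod (by omega), Nat.mod_eq_of_lt (by omega)]
        rw [this]
        omega

lemma numOrbits_eq_nat_card' {m : ℕ} (p : Equiv.Perm (Fin m)) :
    numOrbits p = Nat.card (Quotient (Equiv.Perm.SameCycle.setoid p)) :=
  numOrbits_eq_nat_card p

lemma finRotate_apply_of_pos {d : ℕ} (hd : 0 < d) (x : Fin d) :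
    haveI : NeZero d := ⟨by omega⟩
    finRotate d x = x + 1 := by
  cases d with
  | zero => omega
  | succ d' => exact finRotate_succ_apply x

lemma core_le {G₁ G₂ : GaussDiagram} (h : IsChordDeletion G₁ G₂) (hn : 1 ≤ G₁.n) :
    numOrbits (boundaryPerm G₂) ≤ numOrbits (boundaryPerm G₁) + 1 := by
  classical
  obtain ⟨hn2, ι, hcomm, a, hmiss'⟩ := h
  set b := G₂.pairing a with hb
  have hmiss : ∀ i, ι i ≠ a ∧ ι i ≠ b := hmiss'
  have hab : a ≠ b := Ne.symm (G₂.fixfree a)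
  have hm : 2 * G₂.n = 2 * G₁.n + 2 := by omega
  have hd : 2 ≤ 2 * G₁.n := by omega
  haveI : NeZero (2 * G₂.n) := ⟨by omega⟩
  haveI : NeZero (2 * G₁.n) := ⟨by omega⟩
  have hm4 : 4 ≤ 2 * G₂.n := by omega
  set σ₁ := boundaryPerm G₁ with hσ₁def
  set σ₂ := boundaryPerm G₂ with hσ₂def
  set p' : Equiv.Perm (Fin (2 * G₂.n)) := σ₂ * Equiv.swap a b with hp'
  have happly2 : ∀ x, σ₂ x = G₂.pairing x + 1 := by
    intro x
    rw [hσ₂def]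
    show finRotate (2 * G₂.n) (G₂.pairing x) = G₂.pairing x + 1
    exact finRotate_apply_of_pos (by omega) _
  have happly1 : ∀ x, σ₁ x = G₁.pairing x + 1 := by
    intro x
    rw [hσ₁def]
    show finRotate (2 * G₁.n) (G₁.pairing x) = G₁.pairing x + 1
    exact finRotate_apply_of_pos (by omega) _
  have hp'S : ∀ i, p' (ι i) = ι (G₁.pairing i) + 1 := by
    intro i
    rw [hp', Equiv.Perm.mul_apply,
      Equiv.swap_apply_of_ne_of_ne (hmiss i).1 (hmiss i).2, happly2, hcomm]
  have hp'a : p' a = a + 1 := by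
    rw [hp', Equiv.Perm.mul_apply, Equiv.swap_apply_left, happly2, hb,
      G₂.involutive a]
  have hp'b : p' b = b + 1 := by
    rw [hp', Equiv.Perm.mul_apply, Equiv.swap_apply_right, happly2, ← hb]
  have hrange := mem_pair_of_not_range ι a b hm hab hmiss
  have hv1 : ∀ y : Fin (2 * G₂.n), (y + 1).val = (y.val + 1) % (2 * G₂.n) := by
    intro y
    rw [Fin.add_def, Fin.val_one']
    rw [Nat.mod_eq_of_lt (show 1 < 2 * G₂.n by omega)]
  have hne : ∀ y : Fin (2 * G₂.n), y + 1 ≠ y := by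
    intro y hy
    have hvy := congrArg Fin.val hy
    rw [hv1] at hvy
    have := y.isLt
    by_cases hlt : y.val + 1 < 2 * G₂.n
    · rw [Nat.mod_eq_of_lt hlt] at hvy; omega
    · have hy2 : y.val + 1 = 2 * G₂.n := by omega
      rw [hy2, Nat.mod_self] at hvy; omega
  have hnocycle : ¬(a + 1 = b ∧ b + 1 = a) := by
    rintro ⟨h1, h2⟩
    have hva := congrArg Fin.val h1
    have hvb := congrArg Fin.val h2
    rw [hv1] at hva hvb
    have ha' := a.isLt
    have hb' := b.isLt
    by_cases hlta : a.val + 1 < 2 * G₂.n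
    · rw [Nat.mod_eq_of_lt hlta] at hva
      by_cases hltb : b.val + 1 < 2 * G₂.n
      · rw [Nat.mod_eq_of_lt hltb] at hvb; omega
      · have hb2 : b.val + 1 = 2 * G₂.n := by omega
        rw [hb2, Nat.mod_self] at hvb; omega
    · have ha2 : a.val + 1 = 2 * G₂.n := by omega
      rw [ha2, Nat.mod_self] at hva
      rw [Nat.mod_eq_of_lt (by omega)] at hvb
      omega
  have hstep : ∀ i, p'.SameCycle (ι i) (ι (σ₁ i)) := by
    intro i
    obtain ⟨k, hk1, hk3, hkeq, hkint⟩ := succ_step ι a b hm hd hab hmiss (G₁.pairing i)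
    have hclaim : ∀ t, 1 ≤ t → t ≤ k →
        (p' ^ t) (ι i) = ι (G₁.pairing i) + (t : Fin (2 * G₂.n)) := by
      intro t
      induction t with
      | zero => intro h1 _; omega
      | succ t ih =>
        intro h1 hk
        by_cases ht0 : t = 0
        · subst ht0
          rw [pow_one, hp'S i]
          norm_num
        · have ht1 : 1 ≤ t := by omega
          have heq := ih ht1 (by omega)
          rw [pow_succ', Equiv.Perm.mul_apply, heq]
          have hnot := hkint t ht1 (by omega)
          have hcast : ((t + 1 : ℕ) : Fin (2 * G₂.n)) = ((t : ℕ) : Fin (2 * G₂.n)) + 1 := by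
            push_cast; ring
          rcases hrange (ι (G₁.pairing i) + (t : Fin (2 * G₂.n))) with ⟨i', hi'⟩ | hxa | hxb
          · exact absurd hi' (hnot i')
          · rw [hxa, hp'a, ← hxa, hcast, add_assoc]
          · rw [hxb, hp'b, ← hxb, hcast, add_assoc]
    refine ⟨(k : ℤ), ?_⟩
    rw [zpow_natCast, hclaim k hk1 le_rfl, happly1 i, hkeq]
  have haux : ∀ (k : ℕ) (i : Fin (2 * G₁.n)), p'.SameCycle (ι i) (ι ((σ₁ ^ k) i)) := by
    intro k
    induction k with
    | zero => intro i; simp [Equiv.Perm.SameCycle.refl]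
    | succ k ih =>
      intro i
      rw [pow_succ, Equiv.Perm.mul_apply]
      exact (hstep i).trans (ih (σ₁ i))
  have hwd : ∀ i i', σ₁.SameCycle i i' → p'.SameCycle (ι i) (ι i') := by
    intro i i' hii
    obtain ⟨k, -, hk⟩ := hii.exists_pow_eq'
    exact hk ▸ haux k i
  set Φ : Quotient (Equiv.Perm.SameCycle.setoid σ₁) →
      Quotient (Equiv.Perm.SameCycle.setoid p') :=
    Quotient.lift (fun i => Quotient.mk (Equiv.Perm.SameCycle.setoid p') (ι i))
      (fun i i' hii => Quotient.sound (hwd i i' hii)) with hΦ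
  have hreach : ∀ x : Fin (2 * G₂.n), ∃ i, p'.SameCycle (ι i) x := by
    intro x
    rcases hrange x with ⟨i, rfl⟩ | hxa | hxb
    · exact ⟨i, Equiv.Perm.SameCycle.refl _ _⟩
    · rw [hxa]
      rcases hrange (a + 1) with ⟨i, hi⟩ | h1 | h1
      · refine ⟨i, Equiv.Perm.SameCycle.symm ⟨1, ?_⟩⟩
        rw [zpow_one, hp'a, hi]
      · exact absurd h1 (hne a)
      · rcases hrange (b + 1) with ⟨i, hi⟩ | h2 | h2
        · refine ⟨i, Equiv.Perm.SameCycle.symm ⟨2, ?_⟩⟩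
          have hsq : (p' ^ (2 : ℤ)) a = p' (p' a) := by
            rw [show (2 : ℤ) = ((2 : ℕ) : ℤ) by norm_num, zpow_natCast, sq,
              Equiv.Perm.mul_apply]
          rw [hsq, hp'a, h1, hp'b, hi]
        · exact absurd ⟨h1, h2⟩ hnocycle
        · exact absurd h2 (hne b)
    · rw [hxb]
      rcases hrange (b + 1) with ⟨i, hi⟩ | h1 | h1
      · refine ⟨i, Equiv.Perm.SameCycle.symm ⟨1, ?_⟩⟩
        rw [zpow_one, hp'b, hi]
      · rcases hrange (a + 1) with ⟨i, hi⟩ | h2 | h2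
        · refine ⟨i, Equiv.Perm.SameCycle.symm ⟨2, ?_⟩⟩
          have hsq : (p' ^ (2 : ℤ)) b = p' (p' b) := by
            rw [show (2 : ℤ) = ((2 : ℕ) : ℤ) by norm_num, zpow_natCast, sq,
              Equiv.Perm.mul_apply]
          rw [hsq, hp'b, h1, hp'a, hi]
        · exact absurd h2 (hne a)
        · exact absurd ⟨h2, h1⟩ hnocycle
      · exact absurd h1 (hne b)
  have hsurj : Function.Surjective Φ := by
    intro q
    induction q using Quotient.inductionOn with | h x =>
    obtain ⟨i, hi⟩ := hreach x
    exact ⟨Quotient.mk _ i, Quotient.sound hi⟩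
  have hcard2 := Nat.card_le_card_of_surjective Φ hsurj
  have hcard1 := card_quot_swap_le p' a b
  have hps : p' * Equiv.swap a b = σ₂ := by
    rw [hp', mul_assoc, Equiv.swap_mul_self, mul_one]
  rw [hps] at hcard1
  rw [numOrbits_eq_nat_card' σ₂, numOrbits_eq_nat_card' σ₁]
  omega

lemma genus_mono {G₁ G₂ : GaussDiagram} (h : IsChordDeletion G₁ G₂) :
    genusF G₁ ≤ genusF G₂ := by
  by_cases h0 : G₁.n = 0
  · simp [genusF, ribbonBoundary, h0]
  · have hn : 1 ≤ G₁.n := Nat.one_le_iff_ne_zero.mpr h0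
    have hcore := core_le h hn
    have hn2 := h.1
    unfold genusF ribbonBoundary
    rw [if_neg h0, if_neg (show G₂.n ≠ 0 by omega)]
    apply Nat.div_le_div_right
    omega

lemma genus_mono_rtg {X Y : GaussDiagram}
    (h : Relation.ReflTransGen IsChordDeletion X Y) : genusF X ≤ genusF Y := by
  induction h with
  | refl => exact le_rfl
  | tail _ hstep ih => exact le_trans ih (genus_mono hstep)

/-- Manturov's projection theorem implies that the virtual canonical genus of a virtual
knot realizable by a classical knot `K` equals the canonical genus of `K`.  Here the
equivalence relation `equiv` (generated by the Reidemeister moves) and the set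
`Realizable` of realizable Gauss diagrams are abstract; the classical knot `K` is
represented by a realizable diagram `G₀` and the virtual knot `K̃` realizable by `K` is
the `equiv`-class of `G₀`.  Then
`g_vc(K̃) = min { genus F_G : G ~ G₀ }` equals
`g_c(K) = min { genus F_G : G realizable, G ~ G₀ }`. -/
theorem virtual_canonical_genus_eq_canonical_genus
    (equiv : GaussDiagram → GaussDiagram → Prop) (hequiv : Equivalence equiv)
    (Realizable : GaussDiagram → Prop)
    (proj : GaussDiagram → GaussDiagram)
    (hprojR : ∀ G, Realizable (proj G))
    (h1 : ∀ G₁ G₂, equiv G₁ G₂ → equiv (proj G₁) (proj G₂))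
    (h2 : ∀ G, Relation.ReflTransGen IsChordDeletion (proj G) G)
    (h3 : ∀ G, Realizable G → proj G = G)
    (G₀ : GaussDiagram) (hG₀ : Realizable G₀) :
    sInf (genusF '' {G | equiv G G₀}) =
      sInf (genusF '' {G | Realizable G ∧ equiv G G₀}) := by
  have hBne : (genusF '' {G | Realizable G ∧ equiv G G₀}).Nonempty :=
    ⟨genusF G₀, ⟨G₀, ⟨hG₀, hequiv.refl G₀⟩, rfl⟩⟩
  have hAne : (genusF '' {G | equiv G G₀}).Nonempty :=
    ⟨genusF G₀, ⟨G₀, hequiv.refl G₀, rfl⟩⟩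
  apply le_antisymm
  · obtain ⟨G, hG, hval⟩ := Nat.sInf_mem hBne
    exact Nat.sInf_le ⟨G, hG.2, hval⟩
  · obtain ⟨G, hGe, hGv⟩ := Nat.sInf_mem hAne
    have hge : genusF (proj G) ≤ sInf (genusF '' {G | equiv G G₀}) :=
      hGv ▸ genus_mono_rtg (h2 G)
    have hpe : equiv (proj G) G₀ := h3 G₀ hG₀ ▸ h1 G G₀ hGe
    exact le_trans (Nat.sInf_le ⟨proj G, ⟨hprojR G, hpe⟩, rfl⟩) hge
end deletion
end
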